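/- Let p be a harmonic noncommutative polynomial in x_1,...,x_g and fix 0 < m. Write p = ∑_{|t|=m} x^t·p_t(x) + Λ where the sum is over words t of length m, p_t is the right neighbor of x^t, and deg Λ < m. Then each right neighbor p_t is harmonic: Lap[p_t, h] = 0. -/

import Mathlib

noncomputable section

/-- Variables: `some i` is `xᵢ`, `none` is the direction variable `h`. -/
abbrev Var (g : ℕ) := Option (Fin g)

/-- Noncommutative polynomials `ℝ⟨x₁,…,x_g,h⟩`. -/
abbrev NC (g : ℕ) := MonoidAlgebra ℝ (FreeMonoid (Var g))

/-- The monomial corresponding to a word. -/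
def mono (g : ℕ) (w : List (Var g)) : NC g :=
  MonoidAlgebra.of ℝ (FreeMonoid (Var g)) (FreeMonoid.ofList w)

/-- The generator `xᵢ`. -/
def Xv (g : ℕ) (i : Fin g) : NC g := mono g [some i]

/-- The direction variable `h`. -/
def Hv (g : ℕ) : NC g := mono g [none]

/-- Directional derivative of a word in `xᵢ` in direction `h`: sum of the
terms obtained by replacing one occurrence of `xᵢ` by `h`. -/
def wordD (g : ℕ) (i : Fin g) : List (Var g) → NC g
  | [] => 0
  | a :: w =>
      (if a = some i then mono g (none :: w) else 0) + mono g [a] * wordD g i w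

/-- Directional derivative `D[p, xᵢ, h]`, extended linearly from words. -/
def D (g : ℕ) (i : Fin g) (p : NC g) : NC g :=
  Finsupp.sum p.coeff fun w c => c • wordD g i (FreeMonoid.toList w)

/-- The noncommutative Laplacian `Lap[p,h] := ∑ᵢ D[D[p,xᵢ,h],xᵢ,h]`. -/
def Lap (g : ℕ) (p : NC g) : NC g := ∑ i : Fin g, D g i (D g i p)

/-- The transpose: linear anti-automorphism reversing words and fixing generators. -/
def transp (g : ℕ) (p : NC g) : NC g :=
  MonoidAlgebra.ofCoeff
    (Finsupp.mapDomain (fun w => FreeMonoid.ofList (FreeMonoid.toList w).reverse) p.coeff)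

/-- Evaluation of a polynomial at a tuple of matrices (one for each variable). -/
def eval (g n : ℕ) (M : Var g → Matrix (Fin n) (Fin n) ℝ) (p : NC g) :
    Matrix (Fin n) (Fin n) ℝ :=
  Finsupp.sum p.coeff fun w c => c • ((FreeMonoid.toList w).map M).prod

/-- `p` is a polynomial in `x₁,…,x_g` only (the variable `h` does not occur). -/
def NoH (g : ℕ) (p : NC g) : Prop :=
  ∀ w ∈ p.coeff.support, none ∉ FreeMonoid.toList w

/-- `p` is a homogeneous polynomial of degree `d` in the variables `x₁,…,x_g`. -/
def HomogX (g : ℕ) (d : ℕ) (p : NC g) : Prop :=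
  ∀ w ∈ p.coeff.support, none ∉ FreeMonoid.toList w ∧ (FreeMonoid.toList w).length = d


section AuxLemmas

variable {g : ℕ}

lemma mono_def (u : List (Var g)) : mono g u = MonoidAlgebra.single (FreeMonoid.ofList u) 1 := rfl

lemma mono_mul (u v : List (Var g)) : mono g (u ++ v) = mono g u * mono g v := by
  simp [mono, ← map_mul]

lemma mono_nil : mono g [] = 1 := by simp [mono]; rfl

lemma D_single (i : Fin g) (w : FreeMonoid (Var g)) (c : ℝ) :
    D g i (MonoidAlgebra.single w c) = c • wordD g i (FreeMonoid.toList w) := by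
  simp [D, MonoidAlgebra.coeff_single, Finsupp.sum_single_index]

lemma D_add (i : Fin g) (p q : NC g) : D g i (p + q) = D g i p + D g i q := by
  classical
  simp only [D, MonoidAlgebra.coeff_add]
  rw [Finsupp.sum_add_index] <;> simp [add_smul]

lemma wordD_append (i : Fin g) (u v : List (Var g)) :
    wordD g i (u ++ v) = wordD g i u * mono g v + mono g u * wordD g i v := by
  induction u with
  | nil => simp [wordD, mono_nil]
  | cons a w ih =>
      simp only [List.cons_append, wordD, ih, List.append_eq, add_mul, mul_add, ← mul_assoc]
      have h1 : mono g (none :: (w ++ v)) = mono g (none :: w) * mono g v := by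
        rw [← mono_mul]; rfl
      have h2 : mono g (a :: w) = mono g [a] * mono g w := by
        rw [← mono_mul]; rfl
      rw [h1, h2]
      split <;> noncomm_ring

lemma D_smul (i : Fin g) (c : ℝ) (p : NC g) : D g i (c • p) = c • D g i p := by
  classical
  simp only [D, MonoidAlgebra.coeff_smul, Finsupp.smul_sum]
  rw [Finsupp.sum_smul_index] <;> simp [smul_smul]

lemma single_eq (w : FreeMonoid (Var g)) (c : ℝ) :
    MonoidAlgebra.single w c = c • mono g (FreeMonoid.toList w) := by
  rw [mono_def, FreeMonoid.ofList_toList, MonoidAlgebra.smul_single, smul_eq_mul, mul_one]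

lemma toList_mul (w v : FreeMonoid (Var g)) :
    FreeMonoid.toList (w * v) = FreeMonoid.toList w ++ FreeMonoid.toList v := rfl

lemma D_mul (i : Fin g) (p q : NC g) : D g i (p * q) = D g i p * q + p * D g i q := by
  induction p using MonoidAlgebra.induction_linear with
  | zero => simp [D]
  | add a b ha hb => rw [add_mul, D_add, ha, hb, D_add]; noncomm_ring
  | single w c =>
    induction q using MonoidAlgebra.induction_linear with
    | zero => simp [D]
    | add a b ha hb => rw [mul_add, D_add, ha, hb, D_add]; noncomm_ring
    | single v d =>
      rw [MonoidAlgebra.single_mul_single, D_single, D_single, D_single, toList_mul,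
        wordD_append]
      rw [single_eq w c, single_eq v d]
      simp only [smul_add, smul_mul_assoc, mul_smul_comm, smul_smul]
      ring_nf

lemma wordD_support (i : Fin g) (u : List (Var g)) :
    ∀ v ∈ (wordD g i u).coeff.support,
      (FreeMonoid.toList v).length = u.length ∧ none ∈ FreeMonoid.toList v := by
  classical
  induction u with
  | nil => simp [wordD]
  | cons a w ih =>
    intro v hv
    simp only [wordD] at hv
    rcases Finset.mem_union.mp (Finsupp.support_add hv) with h | h
    · -- from the if-term
      by_cases hai : a = some i
      · rw [if_pos hai] at h
        have := Finsupp.support_single_subset h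
        simp only [Finset.mem_singleton] at this
        subst this
        constructor
        · simp [FreeMonoid.toList_ofList]
        · simp [FreeMonoid.toList_ofList]
      · rw [if_neg hai] at h; simp at h
    · -- from mono [a] * wordD w
      have h2 := MonoidAlgebra.support_coeff_mul_subset (mono g [a]) (wordD g i w) h
      rw [Finset.mem_mul] at h2
      obtain ⟨x, hx, y, hy, hxy⟩ := h2
      have hx' : x = FreeMonoid.ofList [a] := by
        have := Finsupp.support_single_subset hx
        simpa using this
      obtain ⟨hlen, hnone⟩ := ih y hy
      subst hx' hxy
      constructor
      · simp [toList_mul, FreeMonoid.toList_ofList, hlen]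
      · simp [toList_mul, FreeMonoid.toList_ofList, hnone]

lemma D_support (i : Fin g) (p : NC g) :
    ∀ v ∈ (D g i p).coeff.support, ∃ w ∈ p.coeff.support,
      (FreeMonoid.toList v).length = (FreeMonoid.toList w).length ∧
      none ∈ FreeMonoid.toList v := by
  classical
  intro v hv
  rw [D, MonoidAlgebra.coeff_finsuppSum] at hv
  have := Finsupp.support_sum hv
  rw [Finset.mem_biUnion] at this
  obtain ⟨w, hw, hvw⟩ := this
  have hvw' : v ∈ (wordD g i (FreeMonoid.toList w)).coeff.support :=
    Finsupp.support_smul hvw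
  obtain ⟨hlen, hnone⟩ := wordD_support i (FreeMonoid.toList w) v hvw'
  exact ⟨w, hw, hlen, hnone⟩

/-- Extract the right neighbor after a fixed prefix. -/
def phi (pre : List (Var g)) (q : NC g) : NC g :=
  Finsupp.sum q.coeff fun w c =>
    if (FreeMonoid.toList w).take pre.length = pre then
      c • mono g ((FreeMonoid.toList w).drop pre.length) else 0

lemma phi_single (pre : List (Var g)) (w : FreeMonoid (Var g)) (c : ℝ) :
    phi pre (MonoidAlgebra.single w c) =
      if (FreeMonoid.toList w).take pre.length = pre then
        c • mono g ((FreeMonoid.toList w).drop pre.length) else 0 := by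
  rw [phi, MonoidAlgebra.coeff_single, Finsupp.sum_single_index]
  split <;> simp

lemma phi_add (pre : List (Var g)) (a b : NC g) :
    phi pre (a + b) = phi pre a + phi pre b := by
  classical
  rw [phi, MonoidAlgebra.coeff_add, Finsupp.sum_add_index]
  · rfl
  · intro w _; split <;> simp
  · intro w _ c d; split <;> simp [add_smul]

lemma phi_zero (pre : List (Var g)) : phi pre (0 : NC g) = 0 := by simp [phi]

lemma phi_eq_zero (pre : List (Var g)) (q : NC g)
    (h : ∀ w ∈ q.coeff.support, (FreeMonoid.toList w).take pre.length ≠ pre) :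
    phi pre q = 0 := by
  rw [phi, Finsupp.sum]
  refine Finset.sum_eq_zero fun w hw => ?_
  rw [if_neg (h w hw)]

lemma phi_mul_mono (pre : List (Var g)) (q : NC g) :
    phi pre (mono g pre * q) = q := by
  induction q using MonoidAlgebra.induction_linear with
  | zero => simp [phi]
  | add a b ha hb => rw [mul_add, phi_add, ha, hb]
  | single w c =>
    rw [mono_def, MonoidAlgebra.single_mul_single, one_mul, phi_single]
    have ht : FreeMonoid.toList (FreeMonoid.ofList pre * w) =
        pre ++ FreeMonoid.toList w := rfl
    rw [ht, List.take_left, if_pos rfl, List.drop_left, ← single_eq]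

lemma Lap_zero : Lap g (0 : NC g) = 0 := by simp [Lap, D]

lemma Lap_add (a b : NC g) : Lap g (a + b) = Lap g a + Lap g b := by
  simp [Lap, D_add, Finset.sum_add_distrib]

lemma Lap_sum {α : Type*} (s : Finset α) (f : α → NC g) :
    Lap g (∑ a ∈ s, f a) = ∑ a ∈ s, Lap g (f a) := by
  classical
  induction s using Finset.induction_on with
  | empty => simp [Lap_zero]
  | insert _ _ h ih => simp [Finset.sum_insert h, Lap_add, ih]

lemma phi_sum {α : Type*} (pre : List (Var g)) (s : Finset α) (f : α → NC g) :
    phi pre (∑ a ∈ s, f a) = ∑ a ∈ s, phi pre (f a) := by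
  classical
  induction s using Finset.induction_on with
  | empty => simp [phi_zero]
  | insert _ _ h ih => simp [Finset.sum_insert h, phi_add, ih]

lemma Lap_mul (a b : NC g) :
    Lap g (a * b) = Lap g a * b +
      (∑ i : Fin g, (D g i a * D g i b + D g i a * D g i b)) + a * Lap g b := by
  simp only [Lap, ← Finset.sum_add_distrib, Finset.mul_sum, Finset.sum_mul]
  apply Finset.sum_congr rfl; intro i _
  rw [D_mul, D_add, D_mul, D_mul]; abel

lemma Lap_support (q : NC g) :
    ∀ v ∈ (Lap g q).coeff.support, ∃ w ∈ q.coeff.support,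
      (FreeMonoid.toList v).length = (FreeMonoid.toList w).length ∧
      none ∈ FreeMonoid.toList v := by
  intro v hv
  rw [Lap, MonoidAlgebra.coeff_sum] at hv
  obtain ⟨i, _, hv'⟩ := Finsupp.mem_support_finset_sum v hv
  obtain ⟨w1, hw1, hlen1, hn1⟩ := D_support i _ v hv'
  obtain ⟨w2, hw2, hlen2, _⟩ := D_support i _ w1 hw1
  exact ⟨w2, hw2, hlen1.trans hlen2, hn1⟩

/-- Kill: left factor's words contain `none` and have length `pre.length`. -/
lemma phi_kill_none (pre : List (Var g)) (hpre : none ∉ pre) (r s : NC g)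
    (hr : ∀ w ∈ r.coeff.support, (FreeMonoid.toList w).length = pre.length ∧
        none ∈ FreeMonoid.toList w) :
    phi pre (r * s) = 0 := by
  classical
  refine phi_eq_zero pre _ fun v hv heq => ?_
  obtain ⟨w, hw, u, hu, hwu⟩ := Finset.mem_mul.mp (MonoidAlgebra.support_coeff_mul_subset r s hv)
  obtain ⟨hlen, hn⟩ := hr w hw
  subst hwu
  rw [toList_mul, List.take_left' hlen] at heq
  exact hpre (heq ▸ hn)

/-- Kill: wrong prefix. -/
lemma phi_kill_prefix (pre pre' : List (Var g)) (hne : pre' ≠ pre)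
    (hlen : pre'.length = pre.length) (s : NC g) :
    phi pre (mono g pre' * s) = 0 := by
  classical
  refine phi_eq_zero pre _ fun v hv heq => ?_
  obtain ⟨w, hw, u, hu, hwu⟩ := Finset.mem_mul.mp
    (MonoidAlgebra.support_coeff_mul_subset (mono g pre') s hv)
  have hw' : w = FreeMonoid.ofList pre' := by
    have := Finsupp.support_single_subset hw; simpa using this
  subst hwu
  have hlw : FreeMonoid.toList w = pre' := by rw [hw']; rfl
  have hlen' : (FreeMonoid.toList w).length = pre.length := by rw [hlw, hlen]
  rw [toList_mul, List.take_left' hlen'] at heq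
  exact hne (hlw.symm.trans heq)

/-- Kill: all words shorter than the prefix. -/
lemma phi_kill_short (pre : List (Var g)) (s : NC g)
    (h : ∀ w ∈ s.coeff.support, (FreeMonoid.toList w).length < pre.length) :
    phi pre s = 0 := by
  refine phi_eq_zero pre _ fun v hv heq => ?_
  have h1 : ((FreeMonoid.toList v).take pre.length).length = pre.length := by
    rw [heq]
  rw [List.length_take] at h1
  have h2 : pre.length ≤ (FreeMonoid.toList v).length := min_eq_left_iff.mp h1
  have := h v hv
  omega

end AuxLemmas

/-- in the right-neighbor decomposition of a harmonic polynomial,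
every right neighbor is harmonic. -/
theorem right_neighbor_harmonic (g m : ℕ) (hm : 0 < m)
    (p Λ : NC g) (T : Finset (List (Fin g))) (pt : List (Fin g) → NC g)
    (hT : ∀ t ∈ T, t.length = m)
    (hpt : ∀ t ∈ T, NoH g (pt t))
    (hΛdeg : ∀ w ∈ Λ.coeff.support, (FreeMonoid.toList w).length < m)
    (hΛ : NoH g Λ) (hpx : NoH g p)
    (hdecomp : p = (∑ t ∈ T, mono g (t.map some) * pt t) + Λ)
    (hharm : Lap g p = 0) :
    ∀ t ∈ T, Lap g (pt t) = 0 := by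
  classical
  intro t ht
  set pre : List (Var g) := t.map some with hpredef
  have hprelen : pre.length = m := by simp [hpredef, hT t ht]
  have hprenone : (none : Var g) ∉ pre := by simp [hpredef]
  have hmono_supp : ∀ t' ∈ T, ∀ w ∈ (mono g (t'.map some)).coeff.support,
      (FreeMonoid.toList w).length = pre.length := by
    intro t' ht' w hw
    have hws := Finsupp.support_single_subset hw
    simp only [Finset.mem_singleton] at hws
    subst hws
    show (t'.map some).length = pre.length
    simp [hprelen, hT t' ht']
  have key : ∀ t' ∈ T, phi pre (Lap g (mono g (t'.map some) * pt t')) =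
      if t' = t then Lap g (pt t) else 0 := by
    intro t' ht'
    rw [Lap_mul, phi_add, phi_add]
    have p1 : phi pre (Lap g (mono g (t'.map some)) * pt t') = 0 := by
      refine phi_kill_none pre hprenone _ _ fun w hw => ?_
      obtain ⟨w2, hw2, hlen, hn⟩ := Lap_support _ w hw
      exact ⟨hlen.trans (hmono_supp t' ht' w2 hw2), hn⟩
    have p2 : phi pre (∑ i : Fin g,
        (D g i (mono g (t'.map some)) * D g i (pt t') +
         D g i (mono g (t'.map some)) * D g i (pt t'))) = 0 := by
      rw [phi_sum]
      refine Finset.sum_eq_zero fun i _ => ?_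
      rw [phi_add]
      have : phi pre (D g i (mono g (t'.map some)) * D g i (pt t')) = 0 := by
        refine phi_kill_none pre hprenone _ _ fun w hw => ?_
        obtain ⟨w2, hw2, hlen, hn⟩ := D_support i _ w hw
        exact ⟨hlen.trans (hmono_supp t' ht' w2 hw2), hn⟩
      rw [this, add_zero]
    have p3 : phi pre (mono g (t'.map some) * Lap g (pt t')) =
        if t' = t then Lap g (pt t) else 0 := by
      by_cases h : t' = t
      · subst h; rw [if_pos rfl, ← hpredef, phi_mul_mono]
      · rw [if_neg h]
        refine phi_kill_prefix pre _ ?_ ?_ _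
        · intro heq
          exact h (List.map_injective_iff.mpr (Option.some_injective _) heq)
        · simp [hprelen, hT t' ht']
    rw [p1, p2, p3, zero_add, zero_add]
  have h0 : phi pre (Lap g p) = 0 := by rw [hharm, phi_zero]
  rw [hdecomp, Lap_add, Lap_sum, phi_add, phi_sum] at h0
  have hΛ0 : phi pre (Lap g Λ) = 0 := by
    refine phi_kill_short pre _ fun v hv => ?_
    obtain ⟨w, hw, hlen, _⟩ := Lap_support Λ v hv
    rw [hprelen, hlen]
    exact hΛdeg w hw
  rw [hΛ0, add_zero, Finset.sum_congr rfl key, Finset.sum_ite_eq' T t, if_pos ht] at h0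
  exact h0
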